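/- Let g : ℝ → ℝ be analytic near 0, odd, with a strictly positive derivative, and suppose g is not affine near 0 (g'' is not identically zero near 0). Then there exists ε > 0 such that for every s with 0 < |s| < ε, there is no interval around 0 on which (g⁻¹)'(x) = (g⁻¹)'(-2s - x) holds for all x in a neighborhood of -s; equivalently, the map x ↦ -2s - x is not an isometry for the pulled-back line element (g⁻¹)'(x)|dx| near the point -s. -/

import Mathlib

open Filter Topology

theorem shear_gluing_not_isometric
    (g G : ℝ → ℝ)
    (hA : AnalyticAt ℝ g 0)
    (hodd : ∀ x, g (-x) = -g x)
    (hpos : ∀ᶠ x in 𝓝 (0 : ℝ), 0 < deriv g x)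
    (hna : ∀ U ∈ 𝓝 (0 : ℝ), ∃ x ∈ U, deriv (deriv g) x ≠ 0)
    (hGl : ∀ᶠ x in 𝓝 (0 : ℝ), G (g x) = x)
    (hGr : ∀ᶠ y in 𝓝 (g 0), g (G y) = y) :
    ∃ ε > 0, ∀ s : ℝ, 0 < |s| → |s| < ε →
      ¬ ∃ δ > 0, ∀ x : ℝ, |x - (-s)| < δ →
        deriv G x = deriv G (-2 * s - x) := by
  have hg0 : g 0 = 0 := by have h := hodd 0; rw [neg_zero] at h; linarith
  -- analyticity on an open neighborhood
  obtain ⟨U, hU, hUan⟩ := hA.exists_mem_nhds_analyticOnNhd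
  have hU1 : AnalyticOnNhd ℝ (deriv g) U := hUan.deriv
  have hU2 : AnalyticOnNhd ℝ (deriv (deriv g)) U := hU1.deriv
  -- g'' ≠ 0 on a punctured neighborhood of 0
  have h2ne : ∀ᶠ z in 𝓝[≠] (0:ℝ), deriv (deriv g) z ≠ 0 := by
    rcases (hU2 0 (mem_of_mem_nhds hU)).eventually_eq_zero_or_eventually_ne_zero with h | h
    · exfalso
      obtain ⟨V, hV, hVz⟩ := h.exists_mem
      obtain ⟨x, hx, hxne⟩ := hna V hV
      exact hxne (hVz x hx)
    · exact h
  have h2ne' : ∀ᶠ z in 𝓝 (0:ℝ), z ≠ 0 → deriv (deriv g) z ≠ 0 :=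
    eventually_nhdsWithin_iff.mp h2ne
  -- strict derivative at 0
  have hd0 : (0:ℝ) < deriv g 0 := hpos.self_of_nhds
  have hgs : ∀ z ∈ U, HasStrictDerivAt g (deriv g z) z := by
    intro z hz
    have := (hUan z hz).hasStrictFDerivAt.hasStrictDerivAt
    simpa using this
  have hsd0 : HasStrictDerivAt g (deriv g 0) 0 := hgs 0 (mem_of_mem_nhds hU)
  -- the local inverse as a partial homeomorph
  set Φ := (hsd0.hasStrictFDerivAt_equiv hd0.ne').toOpenPartialHomeomorph g with hΦ
  set ψ : ℝ → ℝ := ⇑Φ.symm with hψ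
  have htar : Φ.target ∈ 𝓝 (0:ℝ) := by
    have h0 : g 0 ∈ Φ.target :=
      (hsd0.hasStrictFDerivAt_equiv hd0.ne').image_mem_toOpenPartialHomeomorph_target
    rw [hg0] at h0
    exact Φ.open_target.mem_nhds h0
  -- G = ψ near 0
  have hGψ : ∀ᶠ y in 𝓝 (0:ℝ), G y = ψ y := by
    have := (hsd0.hasStrictFDerivAt_equiv hd0.ne').localInverse_unique hGl
    rw [hg0] at this
    exact this
  -- ψ tends to 0 at 0
  have hψt : Tendsto ψ (𝓝 (0:ℝ)) (𝓝 (0:ℝ)) := by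
    have := (hsd0.hasStrictFDerivAt_equiv hd0.ne').localInverse_tendsto
    rw [hg0] at this
    exact this
  -- collect domain-side conditions on a ball of radius ρ
  have Edom : ∀ᶠ z in 𝓝 (0:ℝ),
      (z ≠ 0 → deriv (deriv g) z ≠ 0) ∧ 0 < deriv g z ∧ z ∈ U :=
    h2ne'.and (hpos.and hU)
  obtain ⟨ρ, hρ, hball⟩ := Metric.eventually_nhds_iff_ball.mp Edom
  have hball' : ∀ z : ℝ, |z| < ρ →
      (z ≠ 0 → deriv (deriv g) z ≠ 0) ∧ 0 < deriv g z ∧ z ∈ U := by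
    intro z hz
    exact hball z (by simpa [Real.dist_eq] using hz)
  have h0ρ : (0:ℝ) ∈ Metric.ball (0:ℝ) ρ := Metric.mem_ball_self hρ
  -- g is strictly monotone on ball 0 ρ
  have hmono : StrictMonoOn g (Metric.ball (0:ℝ) ρ) := by
    apply strictMonoOn_of_deriv_pos (convex_ball 0 ρ)
    · intro z hz
      have hz' : |z| < ρ := by simpa [Real.dist_eq] using hz
      exact ((hUan z (hball' z hz').2.2).differentiableAt.continuousAt).continuousWithinAt
    · intro z hz
      rw [Metric.isOpen_ball.interior_eq] at hz
      have hz' : |z| < ρ := by simpa [Real.dist_eq] using hz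
      exact (hball' z hz').2.1
  -- deriv g is continuous on ball 0 ρ
  have hcontd : ContinuousOn (deriv g) (Metric.ball (0:ℝ) ρ) := by
    intro z hz
    have hz' : |z| < ρ := by simpa [Real.dist_eq] using hz
    exact ((hU1 z (hball' z hz').2.2).differentiableAt.continuousAt).continuousWithinAt
  -- collect target-side conditions
  have Ekey : ∀ᶠ y in 𝓝 (0:ℝ),
      deriv G y = (deriv g (ψ y))⁻¹ ∧ g (ψ y) = y ∧ |ψ y| < ρ := by
    have e1 : ∀ᶠ y in 𝓝 (0:ℝ), ∀ᶠ z in 𝓝 y, G z = ψ z := hGψ.eventually_nhds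
    have e2 : ∀ᶠ y in 𝓝 (0:ℝ), y ∈ Φ.target := htar
    have e3 : ∀ᶠ y in 𝓝 (0:ℝ), |ψ y| < ρ := by
      have : ∀ᶠ y in 𝓝 (0:ℝ), ψ y ∈ Metric.ball (0:ℝ) ρ := hψt (Metric.ball_mem_nhds (0:ℝ) hρ)
      filter_upwards [this] with y hy
      simpa [Real.dist_eq] using hy
    filter_upwards [e1, e2, e3] with y h1 h2 h3
    have hψU : ψ y ∈ U := (hball' _ h3).2.2
    have hpsd : HasStrictDerivAt ψ (deriv g (ψ y))⁻¹ y :=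
      Φ.hasStrictDerivAt_symm h2 (hball' _ h3).2.1.ne' (hgs _ hψU)
    have hGy : deriv G y = deriv ψ y := Filter.EventuallyEq.deriv_eq h1
    refine ⟨hGy.trans hpsd.hasDerivAt.deriv, ?_, h3⟩
    exact Φ.right_inv h2
  obtain ⟨r, hr, hkey⟩ := Metric.eventually_nhds_iff_ball.mp Ekey
  have hkey' : ∀ y : ℝ, |y| < r →
      deriv G y = (deriv g (ψ y))⁻¹ ∧ g (ψ y) = y ∧ |ψ y| < ρ := by
    intro y hy
    exact hkey y (by simpa [Real.dist_eq] using hy)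
  -- choose ε
  refine ⟨r / 5, by linarith, ?_⟩
  rintro s hs0 hsε ⟨δ, hδ, H⟩
  set t : ℝ := min δ |s| / 2 with htdef
  have ht : 0 < t := by positivity
  have htδ : t < δ := by
    have : min δ |s| ≤ δ := min_le_left _ _
    simp only [htdef]; linarith
  have hts : t < |s| := by
    have : min δ |s| ≤ |s| := min_le_right _ _
    simp only [htdef]; linarith
  set y₁ : ℝ := -s + t with hy1def
  set y₂ : ℝ := -2 * s - y₁ with hy2def
  have hy2 : y₂ = -s - t := by rw [hy2def, hy1def]; ring
  have hy1r : |y₁| < r := by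
    have : |y₁| ≤ |s| + t := by
      calc |y₁| = |(-s) + t| := by rw [hy1def]
        _ ≤ |(-s)| + |t| := abs_add_le _ _
        _ = |s| + t := by rw [abs_neg, abs_of_pos ht]
    linarith
  have hy2r : |y₂| < r := by
    have : |y₂| ≤ |s| + t := by
      calc |y₂| = |(-s) - t| := by rw [hy2]
        _ ≤ |(-s)| + |t| := abs_sub _ _
        _ = |s| + t := by rw [abs_neg, abs_of_pos ht]
    linarith
  -- the symmetry hypothesis at x = y₁
  have hsym : deriv G y₁ = deriv G y₂ := by
    apply H
    rw [hy1def]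
    simpa [abs_of_pos ht] using htδ
  obtain ⟨hdG1, hgu1, hu1ρ⟩ := hkey' y₁ hy1r
  obtain ⟨hdG2, hgu2, hu2ρ⟩ := hkey' y₂ hy2r
  set u : ℝ := ψ y₁
  set v : ℝ := ψ y₂
  have hu_ball : u ∈ Metric.ball (0:ℝ) ρ := by simpa [Real.dist_eq] using hu1ρ
  have hv_ball : v ∈ Metric.ball (0:ℝ) ρ := by simpa [Real.dist_eq] using hu2ρ
  have hdu : 0 < deriv g u := (hball' u hu1ρ).2.1
  have hdv : 0 < deriv g v := (hball' v hu2ρ).2.1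
  -- deriv g u = deriv g v
  have hderiv_eq : deriv g u = deriv g v := by
    have : (deriv g u)⁻¹ = (deriv g v)⁻¹ := by rw [← hdG1, ← hdG2, hsym]
    exact inv_injective this
  -- u ≠ v
  have huv_ne : u ≠ v := by
    intro h
    have : y₁ = y₂ := by rw [← hgu1, ← hgu2, h]
    rw [hy2] at this
    have : t = 0 := by linarith [this]
    exact ht.ne' this
  -- u and v have the same (strict) sign
  have hsign : (u < 0 ∧ v < 0) ∨ (0 < u ∧ 0 < v) := by
    have key : ∀ w ∈ Metric.ball (0:ℝ) ρ, ∀ y : ℝ, g w = y → y < 0 → w < 0 := by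
      intro w hw y hgw hy
      by_contra hcon
      push_neg at hcon
      rcases eq_or_lt_of_le hcon with h | h
      · rw [← h, hg0] at hgw; linarith [hgw, hy]
      · have := hmono h0ρ hw h
        rw [hg0, hgw] at this; linarith
    have key' : ∀ w ∈ Metric.ball (0:ℝ) ρ, ∀ y : ℝ, g w = y → 0 < y → 0 < w := by
      intro w hw y hgw hy
      by_contra hcon
      push_neg at hcon
      rcases eq_or_lt_of_le hcon with h | h
      · rw [h, hg0] at hgw; linarith [hgw, hy]
      · have := hmono hw h0ρ h
        rw [hg0, hgw] at this; linarith
    rcases lt_or_gt_of_ne (abs_pos.mp hs0).symm with hspos | hsneg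
    · -- s > 0 : y₁, y₂ < 0
      have habs : |s| = s := abs_of_pos hspos
      have h1 : y₁ < 0 := by rw [hy1def]; rw [habs] at hts; linarith
      have h2 : y₂ < 0 := by rw [hy2]; linarith
      exact Or.inl ⟨key u hu_ball y₁ hgu1 h1, key v hv_ball y₂ hgu2 h2⟩
    · -- s < 0 : y₁, y₂ > 0
      have habs : |s| = -s := abs_of_neg hsneg
      have h1 : 0 < y₁ := by rw [hy1def]; linarith
      have h2 : 0 < y₂ := by rw [hy2]; rw [habs] at hts; linarith
      exact Or.inr ⟨key' u hu_ball y₁ hgu1 h1, key' v hv_ball y₂ hgu2 h2⟩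
  -- Rolle gives a zero of g'' between u and v, contradiction
  have rolle : ∀ a b : ℝ, a < b → a ∈ Metric.ball (0:ℝ) ρ → b ∈ Metric.ball (0:ℝ) ρ →
      deriv g a = deriv g b → (a < 0 ∧ b < 0) ∨ (0 < a ∧ 0 < b) → False := by
    intro a b hab ha hb heq hsgn
    have hIcc : Set.Icc a b ⊆ Metric.ball (0:ℝ) ρ := by
      have : Set.OrdConnected (Metric.ball (0:ℝ) ρ) := (convex_ball (0:ℝ) ρ).ordConnected
      exact this.out ha hb
    obtain ⟨c, hc, hc0⟩ := exists_deriv_eq_zero hab (hcontd.mono hIcc) heq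
    have hcρ : |c| < ρ := by
      have := hIcc ⟨le_of_lt hc.1, le_of_lt hc.2⟩
      simpa [Real.dist_eq] using this
    have hcne : c ≠ 0 := by
      rcases hsgn with ⟨_, hb0⟩ | ⟨ha0, _⟩
      · exact ne_of_lt (lt_trans hc.2 hb0)
      · exact (ne_of_gt (lt_trans ha0 hc.1))
    exact (hball' c hcρ).1 hcne hc0
  rcases lt_trichotomy u v with h | h | h
  · exact rolle u v h hu_ball hv_ball hderiv_eq hsign
  · exact huv_ne h
  · exact rolle v u h hv_ball hu_ball hderiv_eq.symm (by tauto)
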